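/- In the graph G, for all a≠b in {1,…,n} and all i,j∈{1,…,d}: d(u_{a,i}, u_{b,j}) = min(i+j, 4d+2−i−j)·M + v_a[i] + v_b[j], and d(u'_{a,i}, u'_{b,j}) = min(i+j, 4d+2−i−j)·M + v_a[i] + v_b[j]. -/
import Mathlib


open Finset

namespace OVGadget

inductive V (n d : ℕ) : Type
  | U : Fin n → Fin d → V n d
  | U' : Fin n → Fin d → V n d
  | l : V n d
  | r : V n d
  deriving DecidableEq, Fintype

def M : ℕ := 4

/-- One-directional edge-weight table encoding the vectors `v_1, …, v_n`; a value `0` means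
"no edge".  Here `j : Fin d` is 0-indexed, so `U k j` is the paper's `u_{k+1, j+1}`, whence
the weights `(j+1)·M + v_k[j]` and `(2d+1−(j+1))·M + v_k[j] = (2d−j)·M + v_k[j]`. -/
def wt0 (n d : ℕ) (v : Fin n → Fin d → Fin 2) : V n d → V n d → ℕ
  | V.U k j, V.l => (j.val + 1) * M + (v k j).val
  | V.U' k j, V.l => (2 * d - j.val) * M + (v k j).val
  | V.U k j, V.r => (2 * d - j.val) * M + (v k j).val
  | V.U' k j, V.r => (j.val + 1) * M + (v k j).val
  | _, _ => 0

/-- The symmetrized edge weight. -/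
def wtE (n d : ℕ) (v : Fin n → Fin d → Fin 2) (x y : V n d) : ℕ :=
  wt0 n d v x y + wt0 n d v y x

/-- The graph `G`: `x` and `y` are adjacent iff the weight table records an edge. -/
def G (n d : ℕ) (v : Fin n → Fin d → Fin 2) : SimpleGraph (V n d) :=
  SimpleGraph.fromRel fun x y => wt0 n d v x y ≠ 0

/-- The total weight of a walk. -/
def wWeight {n d : ℕ} {v : Fin n → Fin d → Fin 2} {x y : V n d}
    (p : (G n d v).Walk x y) : ℕ :=
  (p.darts.map fun e => wtE n d v e.toProd.1 e.toProd.2).sum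

/-- The weighted shortest-path distance: the minimum over paths from `x` to `y` of the sum
of the edge weights along the path. -/
noncomputable def dist (n d : ℕ) (v : Fin n → Fin d → Fin 2) (x y : V n d) : ℕ :=
  sInf {m | ∃ p : (G n d v).Walk x y, p.IsPath ∧ wWeight p = m}

/-- Membership in the set `S_k = {u_{k,j}, u'_{k,j} : j}`. -/
def inS (n d : ℕ) (k : Fin n) (x : V n d) : Prop :=
  (∃ j : Fin d, x = V.U k j) ∨ (∃ j : Fin d, x = V.U' k j)

/-- The set `S_k` as a finite set of vertices. -/
def SF (n d : ℕ) (k : Fin n) : Finset (V n d) :=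
  (Finset.univ.image fun j : Fin d => V.U k j)
    ∪ (Finset.univ.image fun j : Fin d => V.U' k j)

/-- `Max-Dist(S_a, S_b) = max_{x ∈ S_a, y ∈ S_b} d(x, y)`. -/
noncomputable def maxDist (n d : ℕ) (v : Fin n → Fin d → Fin 2) (a b : Fin n) : ℕ :=
  (SF n d a ×ˢ SF n d b).sup fun p => dist n d v p.1 p.2
variable {n d : ℕ} {v : Fin n → Fin d → Fin 2}

def isU (x : V n d) : Prop := (∃ k m, x = V.U k m) ∨ ∃ k m, x = V.U' k m

lemma adj_iff {x y : V n d} :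
    (G n d v).Adj x y ↔ x ≠ y ∧ (wt0 n d v x y ≠ 0 ∨ wt0 n d v y x ≠ 0) :=
  SimpleGraph.fromRel_adj _ x y

lemma adj_from_isU {x y : V n d} (hx : isU x) (h : (G n d v).Adj x y) :
    y = V.l ∨ y = V.r := by
  rw [adj_iff] at h
  rcases hx with ⟨k, m, rfl⟩ | ⟨k, m, rfl⟩ <;>
    cases y <;> simp [wt0] at h <;> simp

lemma adj_from_lr {c z : V n d} (hc : c = V.l ∨ c = V.r) (h : (G n d v).Adj c z) : isU z := by
  rw [adj_iff] at h
  rcases hc with rfl | rfl <;> cases z <;> simp [wt0, isU] at h ⊢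

lemma isU_ne_l {x : V n d} (hx : isU x) : x ≠ V.l := by
  rcases hx with ⟨k, m, rfl⟩ | ⟨k, m, rfl⟩ <;> simp

lemma isU_ne_r {x : V n d} (hx : isU x) : x ≠ V.r := by
  rcases hx with ⟨k, m, rfl⟩ | ⟨k, m, rfl⟩ <;> simp

lemma wWeight_cons {x y z : V n d} (h : (G n d v).Adj x y) (p : (G n d v).Walk y z) :
    wWeight (SimpleGraph.Walk.cons h p) = wtE n d v x y + wWeight p := by
  simp [wWeight]

lemma wWeight_nil {x : V n d} : wWeight (SimpleGraph.Walk.nil : (G n d v).Walk x x) = 0 := by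
  simp [wWeight]

open SimpleGraph Walk in
lemma tail_weight {c y : V n d} (hc : c = V.l ∨ c = V.r) (hy : isU y)
    (q : (G n d v).Walk c y) (hq : q.IsPath) :
    wWeight q = wtE n d v c y ∨
    ∃ z c', isU z ∧ (c' = V.l ∨ c' = V.r) ∧ c' ≠ c ∧
      wWeight q = wtE n d v c z + wtE n d v z c' + wtE n d v c' y := by
  cases q with
  | nil =>
    rcases hc with rfl | rfl
    · exact absurd rfl (isU_ne_l hy)
    · exact absurd rfl (isU_ne_r hy)
  | @cons _ z _ h2 q2 =>
    have hz : isU z := adj_from_lr hc h2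
    rw [cons_isPath_iff] at hq
    obtain ⟨hq2, hcns⟩ := hq
    by_cases hzy : z = y
    · subst hzy
      rw [isPath_iff_eq_nil] at hq2
      subst hq2
      left; simp [wWeight_cons, wWeight_nil]
    · cases q2 with
      | nil => exact absurd rfl hzy
      | @cons _ c' _ h3 q3 =>
        have hc' : c' = V.l ∨ c' = V.r := adj_from_isU hz h3
        rw [cons_isPath_iff] at hq2
        obtain ⟨hq3, hzns⟩ := hq2
        have hc'c : c' ≠ c := by
          intro e
          apply hcns
          simp only [support_cons, List.mem_cons]
          exact Or.inr (e ▸ q3.start_mem_support)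
        cases q3 with
        | nil =>
          rcases hc' with rfl | rfl
          · exact absurd rfl (isU_ne_l hy)
          · exact absurd rfl (isU_ne_r hy)
        | @cons _ w _ h4 q4 =>
          have hw : isU w := adj_from_lr hc' h4
          rw [cons_isPath_iff] at hq3
          obtain ⟨hq4, hc'ns⟩ := hq3
          have hwy : w = y := by
            by_contra hne
            cases q4 with
            | nil => exact hne rfl
            | @cons _ c'' _ h5 q5 =>
              have hc'' : c'' = V.l ∨ c'' = V.r := adj_from_isU hw h5
              have hmem : c'' ∈ q5.support := q5.start_mem_support
              have h1 : c'' ≠ c' := by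
                intro e
                apply hc'ns
                simp only [support_cons, List.mem_cons]
                exact Or.inr (e ▸ hmem)
              have h2 : c'' ≠ c := by
                intro e
                apply hcns
                simp only [support_cons, List.mem_cons]
                exact Or.inr (Or.inr (Or.inr (e ▸ hmem)))
              rcases hc with rfl | rfl <;> rcases hc' with rfl | rfl <;>
                rcases hc'' with rfl | rfl <;> simp_all
          subst hwy
          rw [isPath_iff_eq_nil] at hq4
          subst hq4
          right
          refine ⟨z, c', hz, hc', hc'c, ?_⟩
          simp [wWeight_cons, wWeight_nil, Nat.add_assoc]

open SimpleGraph Walk in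
lemma walk_weight {x y : V n d} (hx : isU x) (hy : isU y) (hxy : x ≠ y)
    (p : (G n d v).Walk x y) (hp : p.IsPath) :
    (wWeight p = wtE n d v x V.l + wtE n d v V.l y) ∨
    (wWeight p = wtE n d v x V.r + wtE n d v V.r y) ∨
    (∃ z, isU z ∧
      (wWeight p = wtE n d v x V.l + wtE n d v V.l z + wtE n d v z V.r + wtE n d v V.r y ∨
       wWeight p = wtE n d v x V.r + wtE n d v V.r z + wtE n d v z V.l + wtE n d v V.l y)) := by
  cases p with
  | nil => exact absurd rfl hxy
  | @cons _ c _ h1 p1 =>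
    have hc : c = V.l ∨ c = V.r := adj_from_isU hx h1
    rw [cons_isPath_iff] at hp
    rcases tail_weight hc hy p1 hp.1 with h | ⟨z, c', hz, hc', hc'c, h⟩
    · rcases hc with rfl | rfl
      · left; rw [wWeight_cons, h]
      · right; left; rw [wWeight_cons, h]
    · rcases hc with rfl | rfl
      · have hcr : c' = V.r := by
          rcases hc' with h' | h'
          · exact absurd h' hc'c
          · exact h'
        subst hcr
        exact Or.inr (Or.inr ⟨z, hz, Or.inl (by rw [wWeight_cons, h]; ring)⟩)
      · have hcl : c' = V.l := by
          rcases hc' with h' | h'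
          · exact h'
          · exact absurd h' hc'c
        subst hcl
        exact Or.inr (Or.inr ⟨z, hz, Or.inr (by rw [wWeight_cons, h]; ring)⟩)


lemma wtE_comm (x y : V n d) : wtE n d v x y = wtE n d v y x := Nat.add_comm _ _

@[simp] lemma wtE_Ul (k : Fin n) (m : Fin d) :
    wtE n d v (V.U k m) V.l = (m.val + 1) * 4 + (v k m).val := by simp [wtE, wt0, M]
@[simp] lemma wtE_Ur (k : Fin n) (m : Fin d) :
    wtE n d v (V.U k m) V.r = (2 * d - m.val) * 4 + (v k m).val := by simp [wtE, wt0, M]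
@[simp] lemma wtE_U'l (k : Fin n) (m : Fin d) :
    wtE n d v (V.U' k m) V.l = (2 * d - m.val) * 4 + (v k m).val := by simp [wtE, wt0, M]
@[simp] lemma wtE_U'r (k : Fin n) (m : Fin d) :
    wtE n d v (V.U' k m) V.r = (m.val + 1) * 4 + (v k m).val := by simp [wtE, wt0, M]
@[simp] lemma wtE_lU (k : Fin n) (m : Fin d) :
    wtE n d v V.l (V.U k m) = (m.val + 1) * 4 + (v k m).val := by simp [wtE, wt0, M]
@[simp] lemma wtE_rU (k : Fin n) (m : Fin d) :
    wtE n d v V.r (V.U k m) = (2 * d - m.val) * 4 + (v k m).val := by simp [wtE, wt0, M]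
@[simp] lemma wtE_lU' (k : Fin n) (m : Fin d) :
    wtE n d v V.l (V.U' k m) = (2 * d - m.val) * 4 + (v k m).val := by simp [wtE, wt0, M]
@[simp] lemma wtE_rU' (k : Fin n) (m : Fin d) :
    wtE n d v V.r (V.U' k m) = (m.val + 1) * 4 + (v k m).val := by simp [wtE, wt0, M]

lemma adj_u_l {x : V n d} (hx : isU x) : (G n d v).Adj x V.l := by
  rw [adj_iff]
  rcases hx with ⟨k, m, rfl⟩ | ⟨k, m, rfl⟩
  · refine ⟨by simp, Or.inl ?_⟩
    simp only [wt0, M]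
    omega
  · refine ⟨by simp, Or.inl ?_⟩
    have := m.isLt
    simp only [wt0, M]
    omega

lemma adj_u_r {x : V n d} (hx : isU x) : (G n d v).Adj x V.r := by
  rw [adj_iff]
  rcases hx with ⟨k, m, rfl⟩ | ⟨k, m, rfl⟩
  · refine ⟨by simp, Or.inl ?_⟩
    have := m.isLt
    simp only [wt0, M]
    omega
  · refine ⟨by simp, Or.inl ?_⟩
    simp only [wt0, M]
    omega

open SimpleGraph Walk in
lemma dist_eq_min {x y : V n d} (hx : isU x) (hy : isU y) (hxy : x ≠ y)
    (h4 : ∀ z : V n d, isU z →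
      min (wtE n d v x V.l + wtE n d v V.l y) (wtE n d v x V.r + wtE n d v V.r y) ≤
          wtE n d v x V.l + wtE n d v V.l z + wtE n d v z V.r + wtE n d v V.r y ∧
      min (wtE n d v x V.l + wtE n d v V.l y) (wtE n d v x V.r + wtE n d v V.r y) ≤
          wtE n d v x V.r + wtE n d v V.r z + wtE n d v z V.l + wtE n d v V.l y) :
    dist n d v x y =
      min (wtE n d v x V.l + wtE n d v V.l y) (wtE n d v x V.r + wtE n d v V.r y) := by
  have hxl : (G n d v).Adj x V.l := adj_u_l hx
  have hxr : (G n d v).Adj x V.r := adj_u_r hx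
  have hyl : (G n d v).Adj V.l y := ((G n d v).adj_symm (adj_u_l hy))
  have hyr : (G n d v).Adj V.r y := ((G n d v).adj_symm (adj_u_r hy))
  have hxnl : x ≠ V.l := isU_ne_l hx
  have hxnr : x ≠ V.r := isU_ne_r hx
  have hynl : V.l ≠ y := fun e => isU_ne_l hy e.symm
  have hynr : V.r ≠ y := fun e => isU_ne_r hy e.symm
  set S := {m | ∃ p : (G n d v).Walk x y, p.IsPath ∧ wWeight p = m} with hS
  have pathl : (G n d v).Walk x y := Walk.cons hxl (Walk.cons hyl Walk.nil)
  have meml : wtE n d v x V.l + wtE n d v V.l y ∈ S := by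
    refine ⟨Walk.cons hxl (Walk.cons hyl Walk.nil), ?_, ?_⟩
    · rw [cons_isPath_iff, cons_isPath_iff]
      refine ⟨⟨IsPath.nil, by simp [hynl]⟩, ?_⟩
      simp [hxnl, hxy]
    · simp [wWeight_cons, wWeight_nil]
  have memr : wtE n d v x V.r + wtE n d v V.r y ∈ S := by
    refine ⟨Walk.cons hxr (Walk.cons hyr Walk.nil), ?_, ?_⟩
    · rw [cons_isPath_iff, cons_isPath_iff]
      refine ⟨⟨IsPath.nil, by simp [hynr]⟩, ?_⟩
      simp [hxnr, hxy]
    · simp [wWeight_cons, wWeight_nil]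
  have hlb : ∀ m ∈ S, min (wtE n d v x V.l + wtE n d v V.l y)
      (wtE n d v x V.r + wtE n d v V.r y) ≤ m := by
    rintro m ⟨p, hp, rfl⟩
    rcases walk_weight hx hy hxy p hp with h | h | ⟨z, hz, h | h⟩
    · rw [h]; exact min_le_left _ _
    · rw [h]; exact min_le_right _ _
    · rw [h]; exact (h4 z hz).1
    · rw [h]; exact (h4 z hz).2
  refine le_antisymm ?_ (le_csInf ⟨_, meml⟩ hlb)
  exact le_min (Nat.sInf_le meml) (Nat.sInf_le memr)

/-- For `a ≠ b` and 1-indexed coordinates `i, j`: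
`d(u_{a,i}, u_{b,j}) = min(i+j, 4d+2−i−j)·M + v_a[i] + v_b[j]` and the same for the primed
vertices.  (With the 0-indexed `i, j : Fin d` used here, `min(i+j, 4d+2−i−j)` reads
`min (i+j+2) (4d−i−j)`.) -/
theorem dist_unprimed_primed_pairs (n d : ℕ) (hn : 2 ≤ n) (hd : 1 ≤ d)
    (v : Fin n → Fin d → Fin 2) (a b : Fin n) (hab : a ≠ b) (i j : Fin d) :
    dist n d v (V.U a i) (V.U b j) =
      min (i.val + j.val + 2) (4 * d - i.val - j.val) * M + (v a i).val + (v b j).val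
    ∧ dist n d v (V.U' a i) (V.U' b j) =
      min (i.val + j.val + 2) (4 * d - i.val - j.val) * M + (v a i).val + (v b j).val := by
  have hi := i.isLt
  have hj := j.isLt
  have hva := (v a i).isLt
  have hvb := (v b j).isLt
  constructor
  · have hxy : (V.U a i : V n d) ≠ V.U b j := by
      intro e
      exact hab (by injection e)
    have h4 : ∀ z : V n d, isU z →
        min (wtE n d v (V.U a i) V.l + wtE n d v V.l (V.U b j))
            (wtE n d v (V.U a i) V.r + wtE n d v V.r (V.U b j)) ≤
          wtE n d v (V.U a i) V.l + wtE n d v V.l z + wtE n d v z V.r +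
            wtE n d v V.r (V.U b j) ∧
        min (wtE n d v (V.U a i) V.l + wtE n d v V.l (V.U b j))
            (wtE n d v (V.U a i) V.r + wtE n d v V.r (V.U b j)) ≤
          wtE n d v (V.U a i) V.r + wtE n d v V.r z + wtE n d v z V.l +
            wtE n d v V.l (V.U b j) := by
      rintro z (⟨k, m, rfl⟩ | ⟨k, m, rfl⟩) <;>
      · have hm := m.isLt
        have hv := (v k m).isLt
        simp only [wtE_Ul, wtE_lU, wtE_Ur, wtE_rU, wtE_U'l, wtE_lU', wtE_U'r, wtE_rU']
        omega
    rw [dist_eq_min (Or.inl ⟨a, i, rfl⟩) (Or.inl ⟨b, j, rfl⟩) hxy h4]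
    simp only [wtE_Ul, wtE_lU, wtE_Ur, wtE_rU, M]
    omega
  · have hxy : (V.U' a i : V n d) ≠ V.U' b j := by
      intro e
      exact hab (by injection e)
    have h4 : ∀ z : V n d, isU z →
        min (wtE n d v (V.U' a i) V.l + wtE n d v V.l (V.U' b j))
            (wtE n d v (V.U' a i) V.r + wtE n d v V.r (V.U' b j)) ≤
          wtE n d v (V.U' a i) V.l + wtE n d v V.l z + wtE n d v z V.r +
            wtE n d v V.r (V.U' b j) ∧
        min (wtE n d v (V.U' a i) V.l + wtE n d v V.l (V.U' b j))
            (wtE n d v (V.U' a i) V.r + wtE n d v V.r (V.U' b j)) ≤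
          wtE n d v (V.U' a i) V.r + wtE n d v V.r z + wtE n d v z V.l +
            wtE n d v V.l (V.U' b j) := by
      rintro z (⟨k, m, rfl⟩ | ⟨k, m, rfl⟩) <;>
      · have hm := m.isLt
        have hv := (v k m).isLt
        simp only [wtE_Ul, wtE_lU, wtE_Ur, wtE_rU, wtE_U'l, wtE_lU', wtE_U'r, wtE_rU']
        omega
    rw [dist_eq_min (Or.inr ⟨a, i, rfl⟩) (Or.inr ⟨b, j, rfl⟩) hxy h4]
    simp only [wtE_U'l, wtE_lU', wtE_U'r, wtE_rU', M]
    omega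



end OVGadget
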